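/- For any W ∈ O_𝔚, a, b ∈ ℂ and λ ∈ ℂ*, the vector space L(W, λ, a, b) = W ⊗ ℂ[t, t⁻¹] becomes a module over the Virasoro algebra 𝔙 under the action z · (w ⊗ t^j) = 0 and d_k · (w ⊗ t^j) = ((λ^k e^{kt} − 1) d/dt + a + kb + j) w ⊗ t^{k+j} for all k, j ∈ ℤ and w ∈ W; i.e., these formulas satisfy [d_m, d_n] · v = (d_m d_n − d_n d_m) · v for all m, n ∈ ℤ and v ∈ L(W, λ, a, b). -/

import Mathlib

/-- A representation of the Witt algebra `𝔚 = span{d_i : i ≥ -1}`, encoded by the family of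
operators `d i` (only the indices `i ≥ -1` are relevant) satisfying
`[d_m, d_n] = (n - m) d_{m+n}`. -/
structure WittRep (W : Type*) [AddCommGroup W] [Module ℂ W] where
  d : ℤ → W →ₗ[ℂ] W
  comm : ∀ m n : ℤ, -1 ≤ m → -1 ≤ n →
    d m ∘ₗ d n - d n ∘ₗ d m = (((n - m : ℤ) : ℂ)) • d (m + n)

namespace WittRep

variable {W : Type*} [AddCommGroup W] [Module ℂ W]

/-- Condition A : the module lies in the category `O_𝔚`. -/
def InO (ρ : WittRep W) : Prop :=
  ∀ v : W, ∃ n : ℕ, ∀ i : ℤ, (n : ℤ) ≤ i → ρ.d i v = 0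

/-- The module is trivial: the Lie algebra acts by zero. -/
def IsTrivial (ρ : WittRep W) : Prop := ∀ i : ℤ, -1 ≤ i → ρ.d i = 0

/-- A `𝔚`-submodule. -/
def Invariant (ρ : WittRep W) (U : Submodule ℂ W) : Prop :=
  ∀ i : ℤ, -1 ≤ i → ∀ u ∈ U, ρ.d i u ∈ U

/-- Simplicity of a `𝔚`-module. -/
def IsSimple (ρ : WittRep W) : Prop :=
  (∃ v : W, v ≠ 0) ∧ ∀ U : Submodule ℂ W, ρ.Invariant U → U = ⊥ ∨ U = ⊤

/-- A `𝔟`-submodule (`𝔟 = span{d_i : i ≥ 0}`). -/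
def BInvariant (ρ : WittRep W) (U : Submodule ℂ W) : Prop :=
  ∀ i : ℤ, 0 ≤ i → ∀ u ∈ U, ρ.d i u ∈ U

/-- The socle `Soc_𝔟(W)`: the sum of the minimal nonzero `𝔟`-submodules. -/
def Soc (ρ : WittRep W) : Submodule ℂ W :=
  sSup {U | ρ.BInvariant U ∧ U ≠ ⊥ ∧
    ∀ U' : Submodule ℂ W, ρ.BInvariant U' → U' ≠ ⊥ → U' ≤ U → U' = U}

/-- `w₀` is a highest weight vector of weight `b'`. -/
def IsHW (ρ : WittRep W) (w₀ : W) (b' : ℂ) : Prop :=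
  w₀ ≠ 0 ∧ ρ.d 0 w₀ = b' • w₀ ∧ ∀ i : ℤ, 1 ≤ i → ρ.d i w₀ = 0

/-- `w₀` generates the `𝔚`-module. -/
def Generates (ρ : WittRep W) (w₀ : W) : Prop :=
  ∀ U : Submodule ℂ W, ρ.Invariant U → w₀ ∈ U → U = ⊤

/-- The operator `e^{kt} d/dt = Σ_{i ≥ 0} (k^i/i!) d_{i-1}` (a finite sum on each vector of a
module in `O_𝔚`). -/
noncomputable def E (ρ : WittRep W) (k : ℤ) (w : W) : W :=
  ∑ᶠ i : ℕ, (((k : ℂ) ^ i) / (Nat.factorial i : ℂ)) • ρ.d ((i : ℤ) - 1) w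

/-- The action of `d_k` on `L(W, λ, a, b) = W ⊗ ℂ[t, t⁻¹]`, realized on `ℤ →₀ W`
(`w ⊗ t^j ↦ Finsupp.single j w`):
`d_k · (w ⊗ t^j) = ((λ^k e^{kt} − 1) d/dt + a + kb + j) w ⊗ t^{k+j}`. -/
noncomputable def Lact (ρ : WittRep W) (lam a b : ℂ) (k : ℤ) (f : ℤ →₀ W) : ℤ →₀ W :=
  f.sum fun j w => Finsupp.single (k + j)
    (lam ^ k • ρ.E k w - ρ.d (-1) w + (a + (k : ℂ) * b + (j : ℂ)) • w)

/-- The PBW map `ℕ →₀ ℂ → W`, `(k, c) ↦ c • d_{-1}^k w₀`. -/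
noncomputable def pbwMap (ρ : WittRep W) (w₀ : W) : (ℕ →₀ ℂ) →ₗ[ℂ] W :=
  Finsupp.lsum ℂ fun k : ℕ => ((ρ.d (-1)) ^ k) ∘ₗ LinearMap.toSpanSingleton ℂ W w₀

/-- `W` is the Verma `𝔚`-module with highest weight vector `w₀` of highest weight `b'`. -/
def IsVerma (ρ : WittRep W) (w₀ : W) (b' : ℂ) : Prop :=
  ρ.d 0 w₀ = b' • w₀ ∧ (∀ i : ℤ, 1 ≤ i → ρ.d i w₀ = 0) ∧
    Function.Bijective (ρ.pbwMap w₀)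

/-- `W^{(n)} = Σ_{i=0}^n d_{-1}^i (Soc_𝔟 W)`. -/
noncomputable def Wn (ρ : WittRep W) (n : ℕ) : Submodule ℂ W :=
  ⨆ i : Fin (n + 1), Submodule.map ((ρ.d (-1)) ^ (i : ℕ)) ρ.Soc

/-- `L₀(a, b') = span{d₁^i · (w₀ ⊗ t^{2j})} ⊆ L(W, -1, a, b' + 1)`. -/
noncomputable def Lzero (ρ : WittRep W) (a b' : ℂ) (w₀ : W) : Submodule ℂ (ℤ →₀ W) :=
  Submodule.span ℂ
    {g | ∃ (i : ℕ) (j : ℤ), g = (ρ.Lact (-1) a (b' + 1) 1)^[i] (Finsupp.single (2 * j) w₀)}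

/-- `L₁(a, b') = span{d₁^i · (w₀ ⊗ t^{2j+1})} ⊆ L(W, -1, a, b' + 1)`. -/
noncomputable def Lone (ρ : WittRep W) (a b' : ℂ) (w₀ : W) : Submodule ℂ (ℤ →₀ W) :=
  Submodule.span ℂ
    {g | ∃ (i : ℕ) (j : ℤ), g = (ρ.Lact (-1) a (b' + 1) 1)^[i] (Finsupp.single (2 * j + 1) w₀)}

end WittRep

/-- A representation of the Lie algebra `𝔟 = span{d_i : i ≥ 0}`. -/
structure BRep (B : Type*) [AddCommGroup B] [Module ℂ B] where
  d : ℕ → B →ₗ[ℂ] B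
  comm : ∀ m n : ℕ, d m ∘ₗ d n - d n ∘ₗ d m = (((n : ℂ) - (m : ℂ))) • d (m + n)

namespace BRep

variable {B : Type*} [AddCommGroup B] [Module ℂ B]

/-- Condition A : the module lies in the category `O_𝔟`. -/
def InO (ρ : BRep B) : Prop := ∀ v : B, ∃ n : ℕ, ∀ i : ℕ, n ≤ i → ρ.d i v = 0

def IsTrivial (ρ : BRep B) : Prop := ∀ i : ℕ, ρ.d i = 0

def IsSimple (ρ : BRep B) : Prop :=
  (∃ v : B, v ≠ 0) ∧
    ∀ U : Submodule ℂ B, (∀ i : ℕ, ∀ u ∈ U, ρ.d i u ∈ U) → U = ⊥ ∨ U = ⊤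

/-- The set of `r ∈ ℤ≥0` such that `d_{r+i} v = 0` for all `i ≥ 1`;
`ord_𝔟(v)` is its least element. -/
def ordSet (ρ : BRep B) (v : B) : Set ℕ := {r : ℕ | ∀ i : ℕ, r + 1 ≤ i → ρ.d i v = 0}

/-- The action of `d_m` on the Virasoro module `N(B_(c), a) = B ⊗ ℂ[t, t⁻¹]`, realized on
`ℤ →₀ B`:  `d_m · (w ⊗ t^j) = (Σ_{i≥1} (m^i/i!) d_{i-1} + mc + a + j) w ⊗ t^{m+j}`
(`c` is the twist of the `d₀`-action; `c = 0` gives `N(B, a)`). -/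
noncomputable def Nact (ρ : BRep B) (a c : ℂ) (m : ℤ) (f : ℤ →₀ B) : ℤ →₀ B :=
  f.sum fun j w => Finsupp.single (m + j)
    ((∑ᶠ i : ℕ, (((m : ℂ) ^ (i + 1)) / (Nat.factorial (i + 1) : ℂ)) • ρ.d i w) +
      ((m : ℂ) * c + a + (j : ℂ)) • w)

end BRep

/-- For a family `U : ℤ → Submodule ℂ W`, the subspace `⊕_j U j ⊗ t^j` of `W ⊗ ℂ[t,t⁻¹]`. -/
def gradedSub {W : Type*} [AddCommGroup W] [Module ℂ W] (U : ℤ → Submodule ℂ W) :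
    Submodule ℂ (ℤ →₀ W) where
  carrier := {f | ∀ j, f j ∈ U j}
  add_mem' := fun hf hg j => by
    simpa only [Finsupp.add_apply] using (U j).add_mem (hf j) (hg j)
  zero_mem' := fun j => by simp
  smul_mem' := fun c f hf j => by
    simpa only [Finsupp.smul_apply] using (U j).smul_mem c (hf j)

/-- A submodule invariant under a (ℤ-indexed) family of operators. -/
def ActInvariant {V : Type*} [AddCommGroup V] [Module ℂ V] (act : ℤ → V → V)
    (M : Submodule ℂ V) : Prop :=
  ∀ k : ℤ, ∀ u ∈ M, act k u ∈ M

/-- Simplicity of the module given by a family of operators (the central element acts by zero). -/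
def ActSimple {V : Type*} [AddCommGroup V] [Module ℂ V] (act : ℤ → V → V) : Prop :=
  (∃ v : V, v ≠ 0) ∧ ∀ M : Submodule ℂ V, ActInvariant act M → M = ⊥ ∨ M = ⊤

/-- A representation of the Virasoro algebra. -/
structure VirasoroRep (V : Type*) [AddCommGroup V] [Module ℂ V] where
  d : ℤ → V →ₗ[ℂ] V
  z : V →ₗ[ℂ] V
  comm : ∀ m n : ℤ, d m ∘ₗ d n - d n ∘ₗ d m =
    (((n - m : ℤ) : ℂ)) • d (m + n) +
      (if m + n = 0 then (((n : ℂ) ^ 3 - (n : ℂ)) / 12) else 0) • z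
  comm_z : ∀ m : ℤ, d m ∘ₗ z = z ∘ₗ d m

section Helpers

open Finset

variable {W : Type*} [AddCommGroup W] [Module ℂ W] (ρ : WittRep W)

lemma E_eq_sum {k : ℤ} {w : W} {C : ℕ}
    (h : ∀ i : ℕ, C ≤ i → ρ.d ((i : ℤ) - 1) w = 0) :
    ρ.E k w = ∑ i ∈ range C, (((k : ℂ) ^ i) / (Nat.factorial i : ℂ)) • ρ.d ((i : ℤ) - 1) w := by
  refine finsum_eq_sum_of_support_subset _ fun i hi => ?_
  simp only [Function.mem_support] at hi
  simp only [coe_range, Set.mem_Iio]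
  by_contra hC
  exact hi (by rw [h i (by omega), smul_zero])

lemma E_zero_eq (w : W) : ρ.E 0 w = ρ.d (-1) w := by
  show ∑ᶠ i : ℕ, ((((0 : ℤ) : ℂ) ^ i) / (Nat.factorial i : ℂ)) • ρ.d ((i : ℤ) - 1) w = _
  rw [finsum_eq_single _ 0 (fun i hi => by simp [zero_pow hi])]
  norm_num

lemma E_apply_zero (k : ℤ) : ρ.E k (0 : W) = 0 := by
  rw [E_eq_sum ρ (C := 0) (fun i _ => by simp), Finset.sum_range_zero]

lemma E_add (hO : ρ.InO) (k : ℤ) (u v : W) : ρ.E k (u + v) = ρ.E k u + ρ.E k v := by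
  obtain ⟨Nu, hu⟩ := hO u
  obtain ⟨Nv, hv⟩ := hO v
  have hcu : ∀ i : ℕ, Nu + Nv + 1 ≤ i → ρ.d ((i : ℤ) - 1) u = 0 := fun i hi =>
    hu _ (by push_cast; omega)
  have hcv : ∀ i : ℕ, Nu + Nv + 1 ≤ i → ρ.d ((i : ℤ) - 1) v = 0 := fun i hi =>
    hv _ (by push_cast; omega)
  have hcuv : ∀ i : ℕ, Nu + Nv + 1 ≤ i → ρ.d ((i : ℤ) - 1) (u + v) = 0 := fun i hi => by
    rw [map_add, hcu i hi, hcv i hi, add_zero]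
  rw [E_eq_sum ρ hcu, E_eq_sum ρ hcv, E_eq_sum ρ hcuv, ← Finset.sum_add_distrib]
  exact Finset.sum_congr rfl fun i _ => by rw [map_add, smul_add]

lemma E_smul (hO : ρ.InO) (k : ℤ) (c : ℂ) (u : W) : ρ.E k (c • u) = c • ρ.E k u := by
  obtain ⟨Nu, hu⟩ := hO u
  have hcu : ∀ i : ℕ, Nu + 1 ≤ i → ρ.d ((i : ℤ) - 1) u = 0 := fun i hi =>
    hu _ (by push_cast; omega)
  have hcv : ∀ i : ℕ, Nu + 1 ≤ i → ρ.d ((i : ℤ) - 1) (c • u) = 0 := fun i hi => by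
    rw [map_smul, hcu i hi, smul_zero]
  rw [E_eq_sum ρ hcu, E_eq_sum ρ hcv, Finset.smul_sum]
  exact Finset.sum_congr rfl fun i _ => by rw [map_smul, smul_comm]

lemma E_sub (hO : ρ.InO) (k : ℤ) (u v : W) : ρ.E k (u - v) = ρ.E k u - ρ.E k v := by
  have h := E_add ρ hO k (u - v) v
  rw [sub_add_cancel] at h
  exact eq_sub_of_add_eq h.symm

lemma d_d_eq (i j : ℤ) (hi : -1 ≤ i) (hj : -1 ≤ j) (w : W) :
    ρ.d i (ρ.d j w) = ((j - i : ℤ) : ℂ) • ρ.d (i + j) w + ρ.d j (ρ.d i w) := by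
  have h := LinearMap.congr_fun (ρ.comm i j hi hj) w
  simp only [LinearMap.sub_apply, LinearMap.comp_apply, LinearMap.smul_apply] at h
  exact eq_add_of_sub_eq h

end Helpers

section Helpers2
open Finset
variable {W : Type*} [AddCommGroup W] [Module ℂ W] (ρ : WittRep W)

lemma key1 (x y : ℂ) {w : W} {N : ℕ} (hN : ∀ t : ℤ, (N : ℤ) ≤ t → ρ.d t w = 0) :
    ∑ i ∈ range (N + 2), ∑ j ∈ range (N + 2),
        ((x ^ i / (Nat.factorial i : ℂ)) * (y ^ j / (Nat.factorial j : ℂ)) * (j : ℂ)) •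
          ρ.d ((i : ℤ) + (j : ℤ) - 2) w
      = y • ∑ i ∈ range (N + 2), ∑ j ∈ range (N + 2),
        ((x ^ i / (Nat.factorial i : ℂ)) * (y ^ j / (Nat.factorial j : ℂ))) •
          ρ.d ((i : ℤ) + (j : ℤ) - 1) w := by
  rw [Finset.smul_sum]
  refine Finset.sum_congr rfl fun i _ => ?_
  rw [Finset.smul_sum]
  rw [Finset.sum_range_succ' (fun j => ((x ^ i / (Nat.factorial i : ℂ)) *
      (y ^ j / (Nat.factorial j : ℂ)) * (j : ℂ)) • ρ.d ((i : ℤ) + (j : ℤ) - 2) w) (N + 1)]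
  rw [Finset.sum_range_succ (fun j => y • (((x ^ i / (Nat.factorial i : ℂ)) *
      (y ^ j / (Nat.factorial j : ℂ))) • ρ.d ((i : ℤ) + (j : ℤ) - 1) w)) (N + 1)]
  have hlast : ρ.d ((i : ℤ) + ((N + 1 : ℕ) : ℤ) - 1) w = 0 := hN _ (by push_cast; omega)
  simp only [hlast, smul_zero, add_zero, Nat.cast_zero, mul_zero, zero_smul, add_zero]
  refine Finset.sum_congr rfl fun j _ => ?_
  have hidx : (i : ℤ) + ((j + 1 : ℕ) : ℤ) - 2 = (i : ℤ) + (j : ℤ) - 1 := by push_cast; ring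
  rw [hidx, smul_smul]
  congr 1
  have h1 : ((Nat.factorial j : ℂ)) ≠ 0 := Nat.cast_ne_zero.mpr (Nat.factorial_ne_zero j)
  have h2 : ((j : ℂ) + 1) ≠ 0 := Nat.cast_add_one_ne_zero j
  have h3 : ((Nat.factorial (j + 1) : ℂ)) = ((j : ℂ) + 1) * (Nat.factorial j : ℂ) := by
    rw [Nat.factorial_succ]; push_cast; ring
  have h4 : ((Nat.factorial i : ℂ)) ≠ 0 := Nat.cast_ne_zero.mpr (Nat.factorial_ne_zero i)
  rw [h3, pow_succ]
  push_cast
  field_simp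

lemma key2 (x y : ℂ) {w : W} {N : ℕ} (hN : ∀ t : ℤ, (N : ℤ) ≤ t → ρ.d t w = 0) :
    ∑ i ∈ range (N + 2), ∑ j ∈ range (N + 2),
        ((x ^ i / (Nat.factorial i : ℂ)) * (y ^ j / (Nat.factorial j : ℂ))) •
          ρ.d ((i : ℤ) + (j : ℤ) - 1) w
      = ∑ s ∈ range (N + 2), (((x + y) ^ s) / (Nat.factorial s : ℂ)) • ρ.d ((s : ℤ) - 1) w := by
  have step1 : ∑ i ∈ range (N + 2), ∑ j ∈ range (N + 2),
        ((x ^ i / (Nat.factorial i : ℂ)) * (y ^ j / (Nat.factorial j : ℂ))) •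
          ρ.d ((i : ℤ) + (j : ℤ) - 1) w
      = ∑ i ∈ range (N + 2), ∑ j ∈ range (N + 2 - i),
        ((x ^ i / (Nat.factorial i : ℂ)) * (y ^ j / (Nat.factorial j : ℂ))) •
          ρ.d ((i : ℤ) + (j : ℤ) - 1) w := by
    refine Finset.sum_congr rfl fun i hi => ?_
    refine (Finset.sum_subset (Finset.range_subset_range.mpr (by omega)) fun j hj hj2 => ?_).symm
    simp only [mem_range] at hj hj2
    rw [hN ((i : ℤ) + (j : ℤ) - 1) (by push_cast; omega), smul_zero]
  rw [step1, ← Finset.sum_range_diag_flip (N + 2) (fun i j => ((x ^ i / (Nat.factorial i : ℂ)) *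
      (y ^ j / (Nat.factorial j : ℂ))) • ρ.d ((i : ℤ) + (j : ℤ) - 1) w)]
  refine Finset.sum_congr rfl fun s _ => ?_
  have hstep : ∀ i ∈ range (s + 1),
      ((x ^ i / (Nat.factorial i : ℂ)) * (y ^ (s - i) / (Nat.factorial (s - i) : ℂ))) •
        ρ.d ((i : ℤ) + ((s - i : ℕ) : ℤ) - 1) w
      = (x ^ i * y ^ (s - i) * (s.choose i : ℂ) / (Nat.factorial s : ℂ)) •
        ρ.d ((s : ℤ) - 1) w := by
    intro i hi
    simp only [mem_range, Nat.lt_succ_iff] at hi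
    have hidx : (i : ℤ) + ((s - i : ℕ) : ℤ) - 1 = (s : ℤ) - 1 := by
      push_cast [Nat.cast_sub hi]; ring
    rw [hidx]
    congr 1
    have h := Nat.choose_mul_factorial_mul_factorial hi
    have hc : ((s.choose i : ℂ)) * (Nat.factorial i : ℂ) * (Nat.factorial (s - i) : ℂ)
        = (Nat.factorial s : ℂ) := by exact_mod_cast congrArg (Nat.cast (R := ℂ)) h
    have h1 : ((Nat.factorial i : ℂ)) ≠ 0 := Nat.cast_ne_zero.mpr (Nat.factorial_ne_zero i)
    have h2 : ((Nat.factorial (s - i) : ℂ)) ≠ 0 :=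
      Nat.cast_ne_zero.mpr (Nat.factorial_ne_zero (s - i))
    have h4 : ((Nat.factorial s : ℂ)) ≠ 0 := Nat.cast_ne_zero.mpr (Nat.factorial_ne_zero s)
    field_simp
    rw [← hc]; ring
  rw [Finset.sum_congr rfl hstep, ← Finset.sum_smul]
  congr 1
  rw [add_pow, Finset.sum_div]

lemma E_comm (hO : ρ.InO) (k l : ℤ) (w : W) :
    ρ.E k (ρ.E l w) - ρ.E l (ρ.E k w) = ((l : ℂ) - (k : ℂ)) • ρ.E (k + l) w := by
  obtain ⟨N, hN⟩ := hO w
  have hw1 : ∀ i : ℕ, N + 1 ≤ i → ρ.d ((i : ℤ) - 1) w = 0 := fun i hi =>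
    hN _ (by omega)
  have hw2 : ∀ i : ℕ, N + 2 ≤ i → ρ.d ((i : ℤ) - 1) w = 0 := fun i hi =>
    hN _ (by omega)
  have hdE : ∀ (l' : ℤ) (i : ℕ), N + 2 ≤ i → ρ.d ((i : ℤ) - 1) (ρ.E l' w) = 0 := by
    intro l' i hi
    rw [E_eq_sum ρ hw1, map_sum]
    refine Finset.sum_eq_zero fun j hj => ?_
    simp only [mem_range] at hj
    rw [map_smul, d_d_eq ρ _ _ (by omega) (by omega) w,
      hN (((i : ℤ) - 1) + ((j : ℤ) - 1)) (by omega),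
      hN ((i : ℤ) - 1) (by omega)]
    simp
  have hEE : ∀ k' l' : ℤ, ρ.E k' (ρ.E l' w) = ∑ i ∈ range (N + 2), ∑ j ∈ range (N + 2),
      (((k' : ℂ) ^ i / (Nat.factorial i : ℂ)) * ((l' : ℂ) ^ j / (Nat.factorial j : ℂ))) •
        ρ.d ((i : ℤ) - 1) (ρ.d ((j : ℤ) - 1) w) := by
    intro k' l'
    rw [E_eq_sum ρ (hdE l')]
    refine Finset.sum_congr rfl fun i _ => ?_
    rw [E_eq_sum ρ hw2, map_sum, Finset.smul_sum]
    refine Finset.sum_congr rfl fun j _ => ?_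
    rw [map_smul, smul_smul]
  have hEE2 : ρ.E l (ρ.E k w) = ∑ i ∈ range (N + 2), ∑ j ∈ range (N + 2),
      (((l : ℂ) ^ j / (Nat.factorial j : ℂ)) * ((k : ℂ) ^ i / (Nat.factorial i : ℂ))) •
        ρ.d ((j : ℤ) - 1) (ρ.d ((i : ℤ) - 1) w) := by
    rw [hEE l k]; exact Finset.sum_comm
  rw [hEE k l, hEE2, ← Finset.sum_sub_distrib]
  have hterm : ∀ i ∈ range (N + 2), (∑ j ∈ range (N + 2),
      (((k : ℂ) ^ i / (Nat.factorial i : ℂ)) * ((l : ℂ) ^ j / (Nat.factorial j : ℂ))) •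
        ρ.d ((i : ℤ) - 1) (ρ.d ((j : ℤ) - 1) w))
      - (∑ j ∈ range (N + 2),
      (((l : ℂ) ^ j / (Nat.factorial j : ℂ)) * ((k : ℂ) ^ i / (Nat.factorial i : ℂ))) •
        ρ.d ((j : ℤ) - 1) (ρ.d ((i : ℤ) - 1) w))
      = ∑ j ∈ range (N + 2),
        ((((k : ℂ) ^ i / (Nat.factorial i : ℂ)) * ((l : ℂ) ^ j / (Nat.factorial j : ℂ)) * (j : ℂ))
            • ρ.d ((i : ℤ) + (j : ℤ) - 2) w
          - (((l : ℂ) ^ j / (Nat.factorial j : ℂ)) * ((k : ℂ) ^ i / (Nat.factorial i : ℂ)) * (i : ℂ))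
            • ρ.d ((j : ℤ) + (i : ℤ) - 2) w) := by
    intro i _
    rw [← Finset.sum_sub_distrib]
    refine Finset.sum_congr rfl fun j _ => ?_
    rw [d_d_eq ρ ((i : ℤ) - 1) ((j : ℤ) - 1) (by omega) (by omega) w]
    rw [smul_add, smul_smul]
    have hc : ((k : ℂ) ^ i / (Nat.factorial i : ℂ)) * ((l : ℂ) ^ j / (Nat.factorial j : ℂ)) *
        (((((j : ℤ) - 1) - ((i : ℤ) - 1)) : ℤ) : ℂ)
        = ((k : ℂ) ^ i / (Nat.factorial i : ℂ)) * ((l : ℂ) ^ j / (Nat.factorial j : ℂ)) * (j : ℂ)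
          - ((l : ℂ) ^ j / (Nat.factorial j : ℂ)) * ((k : ℂ) ^ i / (Nat.factorial i : ℂ)) * (i : ℂ) := by
      push_cast; ring
    have hidx : ((i : ℤ) - 1) + ((j : ℤ) - 1) = (i : ℤ) + (j : ℤ) - 2 := by ring
    have hidx2 : (j : ℤ) + (i : ℤ) - 2 = (i : ℤ) + (j : ℤ) - 2 := by ring
    rw [hidx, hidx2, hc, sub_smul,
      mul_comm ((l : ℂ) ^ j / (Nat.factorial j : ℂ)) ((k : ℂ) ^ i / (Nat.factorial i : ℂ))]
    abel
  rw [Finset.sum_congr rfl hterm]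
  have hsplit : ∑ i ∈ range (N + 2), ∑ j ∈ range (N + 2),
        ((((k : ℂ) ^ i / (Nat.factorial i : ℂ)) * ((l : ℂ) ^ j / (Nat.factorial j : ℂ)) * (j : ℂ))
            • ρ.d ((i : ℤ) + (j : ℤ) - 2) w
          - (((l : ℂ) ^ j / (Nat.factorial j : ℂ)) * ((k : ℂ) ^ i / (Nat.factorial i : ℂ)) * (i : ℂ))
            • ρ.d ((j : ℤ) + (i : ℤ) - 2) w)
      = (∑ i ∈ range (N + 2), ∑ j ∈ range (N + 2),
          (((k : ℂ) ^ i / (Nat.factorial i : ℂ)) * ((l : ℂ) ^ j / (Nat.factorial j : ℂ)) * (j : ℂ))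
            • ρ.d ((i : ℤ) + (j : ℤ) - 2) w)
        - ∑ i ∈ range (N + 2), ∑ j ∈ range (N + 2),
          (((l : ℂ) ^ i / (Nat.factorial i : ℂ)) * ((k : ℂ) ^ j / (Nat.factorial j : ℂ)) * (j : ℂ))
            • ρ.d ((i : ℤ) + (j : ℤ) - 2) w := by
    rw [Finset.sum_congr rfl (fun i _ => Finset.sum_sub_distrib _ _), Finset.sum_sub_distrib]
    congr 1
    exact Finset.sum_comm
  rw [hsplit, key1 ρ ((k : ℂ)) ((l : ℂ)) hN, key1 ρ ((l : ℂ)) ((k : ℂ)) hN]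
  have hswap : ∑ i ∈ range (N + 2), ∑ j ∈ range (N + 2),
        (((l : ℂ) ^ i / (Nat.factorial i : ℂ)) * ((k : ℂ) ^ j / (Nat.factorial j : ℂ))) •
          ρ.d ((i : ℤ) + (j : ℤ) - 1) w
      = ∑ i ∈ range (N + 2), ∑ j ∈ range (N + 2),
        (((k : ℂ) ^ i / (Nat.factorial i : ℂ)) * ((l : ℂ) ^ j / (Nat.factorial j : ℂ))) •
          ρ.d ((i : ℤ) + (j : ℤ) - 1) w := by
    rw [Finset.sum_comm]
    refine Finset.sum_congr rfl fun i _ => Finset.sum_congr rfl fun j _ => ?_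
    rw [mul_comm, show (j : ℤ) + (i : ℤ) - 1 = (i : ℤ) + (j : ℤ) - 1 from by ring]
  rw [hswap]
  have hS : ∑ i ∈ range (N + 2), ∑ j ∈ range (N + 2),
        (((k : ℂ) ^ i / (Nat.factorial i : ℂ)) * ((l : ℂ) ^ j / (Nat.factorial j : ℂ))) •
          ρ.d ((i : ℤ) + (j : ℤ) - 1) w = ρ.E (k + l) w := by
    rw [key2 ρ ((k : ℂ)) ((l : ℂ)) hN, E_eq_sum ρ hw2]
    refine Finset.sum_congr rfl fun s _ => ?_
    norm_cast
  rw [hS, ← sub_smul]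
end Helpers2

section Helpers3
open Finset
variable {W : Type*} [AddCommGroup W] [Module ℂ W] (ρ : WittRep W)

lemma Lact_single (lam a b : ℂ) (k j : ℤ) (w : W) :
    ρ.Lact lam a b k (Finsupp.single j w) = Finsupp.single (k + j)
      (lam ^ k • ρ.E k w - ρ.d (-1) w + (a + (k : ℂ) * b + (j : ℂ)) • w) := by
  unfold WittRep.Lact
  rw [Finsupp.sum_single_index]
  rw [E_apply_zero, map_zero, smul_zero, smul_zero]
  simp

lemma Lact_zero (lam a b : ℂ) (k : ℤ) : ρ.Lact lam a b k 0 = 0 := by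
  unfold WittRep.Lact
  exact Finsupp.sum_zero_index

lemma Lact_add (hO : ρ.InO) (lam a b : ℂ) (k : ℤ) (f g : ℤ →₀ W) :
    ρ.Lact lam a b k (f + g) = ρ.Lact lam a b k f + ρ.Lact lam a b k g := by
  unfold WittRep.Lact
  rw [Finsupp.sum_add_index]
  · intro j _
    rw [E_apply_zero, map_zero, smul_zero, smul_zero]
    simp
  · intro j _ w₁ w₂
    rw [E_add ρ hO, map_add, smul_add, smul_add, ← Finsupp.single_add]
    congr 1
    abel

end Helpers3

theorem stmt4 {W : Type*} [AddCommGroup W] [Module ℂ W] (ρ : WittRep W)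
    (hO : ρ.InO) (lam a b : ℂ) (hlam : lam ≠ 0) (m n : ℤ) (f : ℤ →₀ W) :
    ρ.Lact lam a b m (ρ.Lact lam a b n f) - ρ.Lact lam a b n (ρ.Lact lam a b m f)
      = (((n - m : ℤ) : ℂ)) • ρ.Lact lam a b (m + n) f := by
  induction f using Finsupp.induction_linear with
  | zero => simp only [Lact_zero, smul_zero, sub_zero]
  | add f g hf hg =>
    rw [Lact_add ρ hO, Lact_add ρ hO, Lact_add ρ hO, Lact_add ρ hO, Lact_add ρ hO,
      smul_add, ← hf, ← hg]
    abel
  | single j w =>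
    rw [Lact_single, Lact_single, Lact_single, Lact_single, Lact_single,
      show m + (n + j) = m + n + j from by ring, show n + (m + j) = m + n + j from by ring,
      ← Finsupp.single_sub, Finsupp.smul_single]
    congr 1
    -- pointwise identity in W
    have hzp : lam ^ (m + n) = lam ^ m * lam ^ n := zpow_add₀ hlam m n
    rw [← E_zero_eq, ← E_zero_eq, ← E_zero_eq]
    have expand : ∀ (k : ℤ) (c₁ c₂ : ℂ) (u v u' : W),
        ρ.E k (c₁ • u - v + c₂ • u') = c₁ • ρ.E k u - ρ.E k v + c₂ • ρ.E k u' := by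
      intro k c₁ c₂ u v u'
      rw [E_add ρ hO, E_sub ρ hO, E_smul ρ hO, E_smul ρ hO]
    rw [expand, expand, expand, expand]
    have h1 := E_comm ρ hO m n w
    have h2 := E_comm ρ hO 0 n w
    have h3 := E_comm ρ hO 0 m w
    rw [zero_add] at h2 h3
    push_cast at h2 h3 ⊢
    rw [sub_zero] at h2 h3
    have hEnm : ρ.E n (ρ.E m w) = ρ.E m (ρ.E n w) - ((n : ℂ) - (m : ℂ)) • ρ.E (m + n) w := by
      rw [← h1]; abel
    have hEn0 : ρ.E n (ρ.E 0 w) = ρ.E 0 (ρ.E n w) - (n : ℂ) • ρ.E n w := by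
      rw [← h2]; abel
    have hEm0 : ρ.E m (ρ.E 0 w) = ρ.E 0 (ρ.E m w) - (m : ℂ) • ρ.E m w := by
      rw [← h3]; abel
    rw [hEnm, hEn0, hEm0, hzp]
    module
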